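/- Let (d_k) be a summable sequence of nonnegative reals, N ∈ ℕ, and for λ > 0 let ϑ(λ) be the unique positive solution of ϑ = λ + (ϑ/N)∑_k d_k/(d_k + ϑ). Then ϑ is differentiable in λ and its derivative satisfies ∂_λϑ = 1/(1 − (1/N)∑_k d_k²/(d_k + ϑ)²), with 1 ≤ ∂_λϑ ≤ ϑ/λ. -/

import Mathlib

open Filter Set Topology

section sctAux
variable {d : ℕ → ℝ}

-- termwise bounds
lemma sct_b1 (hd : ∀ k, 0 ≤ d k) {a x : ℝ} (ha : 0 < a) (hax : a ≤ x) (k : ℕ) :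
    d k / (d k + x) ≤ d k / a :=
  div_le_div_of_nonneg_left (hd k) ha (by linarith [hd k])

lemma sct_b2 (hd : ∀ k, 0 ≤ d k) {a x : ℝ} (ha : 0 < a) (hax : a ≤ x) (k : ℕ) :
    (d k) ^ 2 / (d k + x) ^ 2 ≤ d k / a := by
  rcases eq_or_lt_of_le (hd k) with h | h
  · rw [← h]; simp
  · have h1 : d k * a ≤ (d k + x) ^ 2 := by nlinarith
    calc (d k) ^ 2 / (d k + x) ^ 2 ≤ (d k) ^ 2 / (d k * a) :=
          div_le_div_of_nonneg_left (by positivity) (by positivity) h1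
      _ = d k / a := by field_simp

lemma sct_b3 (hd : ∀ k, 0 ≤ d k) {a x : ℝ} (ha : 0 < a) (hax : a ≤ x) (k : ℕ) :
    (d k) ^ 2 / (d k + x) ^ 2 ≤ d k / (d k + a) := by
  have hx : (0:ℝ) < d k + x := by linarith [hd k]
  have h0 : (0:ℝ) ≤ d k / (d k + x) := div_nonneg (hd k) hx.le
  have h1 : d k / (d k + x) ≤ 1 := div_le_one_of_le₀ (by linarith) hx.le
  calc (d k) ^ 2 / (d k + x) ^ 2 = (d k / (d k + x)) ^ 2 := by rw [div_pow]
    _ ≤ d k / (d k + x) := by nlinarith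
    _ ≤ d k / (d k + a) := div_le_div_of_nonneg_left (hd k) (by linarith [hd k]) (by linarith)

lemma sct_sum1 (hd : ∀ k, 0 ≤ d k) (hsum : Summable d) {x : ℝ} (hx : 0 < x) :
    Summable fun k => d k / (d k + x) :=
  Summable.of_nonneg_of_le (fun k => div_nonneg (hd k) (by linarith [hd k]))
    (sct_b1 hd hx le_rfl) (hsum.div_const x)

lemma sct_sum2 (hd : ∀ k, 0 ≤ d k) (hsum : Summable d) {x : ℝ} (hx : 0 < x) :
    Summable fun k => (d k) ^ 2 / (d k + x) ^ 2 :=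
  Summable.of_nonneg_of_le (fun k => by positivity)
    (sct_b2 hd hx le_rfl) (hsum.div_const x)


lemma sct_term_deriv (k : ℕ) (hd : ∀ j, 0 ≤ d j) {y : ℝ} (hy : 0 < y) :
    HasDerivAt (fun z => z * d k / (d k + z)) ((d k) ^ 2 / (d k + y) ^ 2) y := by
  have hne : d k + y ≠ 0 := by linarith [hd k]
  have h1 : HasDerivAt (fun z : ℝ => z * d k) (d k) y := by
    simpa using (hasDerivAt_id y).mul_const (d k)
  have h2 : HasDerivAt (fun z : ℝ => d k + z) 1 y := by
    simpa using (hasDerivAt_id y).const_add (d k)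
  have := h1.div h2 hne
  exact this.congr_deriv (by ring)

lemma sct_tsum_deriv (hd : ∀ j, 0 ≤ d j) (hsum : Summable d) {x : ℝ} (hx : 0 < x) :
    HasDerivAt (fun z => ∑' k, z * d k / (d k + z)) (∑' k, (d k) ^ 2 / (d k + x) ^ 2) x := by
  have h2 : (0:ℝ) < x / 2 := by linarith
  refine hasDerivAt_tsum_of_isPreconnected (u := fun k => d k / (x / 2))
    (hsum.div_const _) isOpen_Ioi (isPreconnected_Ioi)
    (fun k y hy => sct_term_deriv k hd (lt_trans h2 hy))
    (fun k y hy => ?_) (show x ∈ Ioi (x/2) by simp [Set.mem_Ioi]; linarith)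
    ?_ (show x ∈ Ioi (x/2) by simp [Set.mem_Ioi]; linarith)
  · rw [Real.norm_eq_abs, abs_of_nonneg (by positivity)]
    exact sct_b2 hd h2 (le_of_lt hy) k
  · refine Summable.of_nonneg_of_le (fun k => ?_) (fun k => ?_) hsum
    · exact div_nonneg (mul_nonneg hx.le (hd k)) (by linarith [hd k])
    · calc x * d k / (d k + x) ≤ x * d k / x :=
            div_le_div_of_nonneg_left (mul_nonneg hx.le (hd k)) hx (by linarith [hd k])
        _ = d k := by field_simp


lemma sct_T_contOn (hd : ∀ k, 0 ≤ d k) (hsum : Summable d) {a : ℝ} (ha : 0 < a) :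
    ContinuousOn (fun x => ∑' k, (d k) ^ 2 / (d k + x) ^ 2) (Ioi a) := by
  refine continuousOn_tsum (fun k => ContinuousOn.div continuousOn_const
    (Continuous.continuousOn (by continuity)) (fun x hx => ?_))
    (hsum.div_const a) (fun k x hx => ?_)
  · have h1 : 0 < d k + x := by have := hd k; have := hx.out; simp only [Set.mem_Ioi] at *; linarith
    positivity
  · rw [Real.norm_eq_abs, abs_of_nonneg (by positivity)]
    exact sct_b2 hd ha (le_of_lt hx) k

lemma sct_g_deriv (hd : ∀ k, 0 ≤ d k) (hsum : Summable d) (N : ℕ) {x : ℝ} (hx : 0 < x) :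
    HasDerivAt (fun z => z - (1 / (N:ℝ)) * ∑' k, z * d k / (d k + z))
      (1 - (1 / (N:ℝ)) * ∑' k, (d k) ^ 2 / (d k + x) ^ 2) x :=
  (hasDerivAt_id x).sub ((sct_tsum_deriv hd hsum hx).const_mul (1 / (N:ℝ)))

lemma sct_key (d : ℕ → ℝ) (N : ℕ) (x : ℝ) :
    x - (1 / (N:ℝ)) * ∑' k, x * d k / (d k + x)
      = x - (x / (N:ℝ)) * ∑' k, d k / (d k + x) := by
  rw [show (fun k => x * d k / (d k + x)) = fun k => x * (d k / (d k + x)) from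
    funext fun k => mul_div_assoc _ _ _, tsum_mul_left]
  ring

lemma sct_S_lt (hd : ∀ k, 0 ≤ d k) {N : ℕ} (hN : 0 < N) {lam x : ℝ} (hlam : 0 < lam)
    (hx : 0 < x) (e : x = lam + (x / N) * ∑' k, d k / (d k + x)) :
    ∑' k, d k / (d k + x) < (N : ℝ) := by
  have hNp : (0:ℝ) < N := Nat.cast_pos.mpr hN
  by_contra hc
  push_neg at hc
  have h2 : (x / N) * N ≤ (x / N) * ∑' k, d k / (d k + x) :=
    mul_le_mul_of_nonneg_left hc (by positivity)
  rw [div_mul_cancel₀ x hNp.ne'] at h2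
  linarith

lemma sct_notlt (hd : ∀ k, 0 ≤ d k) (hsum : Summable d) {N : ℕ} (hN : 0 < N)
    {lam x1 x2 : ℝ} (hlam : 0 < lam) (h1 : 0 < x1) (h2 : 0 < x2) (h12 : x1 < x2)
    (e1 : x1 = lam + (x1 / N) * ∑' k, d k / (d k + x1))
    (e2 : x2 = lam + (x2 / N) * ∑' k, d k / (d k + x2)) : False := by
  have hNp : (0:ℝ) < N := Nat.cast_pos.mpr hN
  have hS1 := sct_S_lt hd hN hlam h1 e1
  have gmono : StrictMonoOn (fun z => z - (1 / (N:ℝ)) * ∑' k, z * d k / (d k + z)) (Ici x1) := by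
    refine strictMonoOn_of_hasDerivWithinAt_pos (convex_Ici x1)
      (fun x hx => ((sct_g_deriv hd hsum N (lt_of_lt_of_le h1 hx)).continuousAt).continuousWithinAt)
      (f' := fun x => 1 - (1 / (N:ℝ)) * ∑' k, (d k) ^ 2 / (d k + x) ^ 2) ?_ ?_
    · rw [interior_Ici]
      intro x hx
      exact (sct_g_deriv hd hsum N (lt_trans h1 hx)).hasDerivWithinAt
    · rw [interior_Ici]
      intro x hx
      have hx0 : 0 < x := lt_trans h1 hx
      have hT : ∑' k, (d k) ^ 2 / (d k + x) ^ 2 ≤ ∑' k, d k / (d k + x1) :=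
        Summable.tsum_le_tsum (fun k => sct_b3 hd h1 (le_of_lt hx) k)
          (sct_sum2 hd hsum hx0) (sct_sum1 hd hsum h1)
      have : (1 / (N:ℝ)) * ∑' k, (d k) ^ 2 / (d k + x) ^ 2 < (1 / (N:ℝ)) * N := by
        apply mul_lt_mul_of_pos_left (lt_of_le_of_lt hT hS1) (by positivity)
      rw [one_div, inv_mul_cancel₀ hNp.ne'] at this
      simp only [one_div]
      linarith
  have hg1 : x1 - (1 / (N:ℝ)) * ∑' k, x1 * d k / (d k + x1) = lam := by
    rw [sct_key]; linarith
  have hg2 : x2 - (1 / (N:ℝ)) * ∑' k, x2 * d k / (d k + x2) = lam := by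
    rw [sct_key]; linarith
  have := gmono (self_mem_Ici) (le_of_lt h12 : x1 ≤ x2) h12
  simp only at this
  rw [hg1, hg2] at this
  exact lt_irrefl _ this

lemma sct_unique (hd : ∀ k, 0 ≤ d k) (hsum : Summable d) {N : ℕ} (hN : 0 < N)
    {lam x1 x2 : ℝ} (hlam : 0 < lam) (h1 : 0 < x1) (h2 : 0 < x2)
    (e1 : x1 = lam + (x1 / N) * ∑' k, d k / (d k + x1))
    (e2 : x2 = lam + (x2 / N) * ∑' k, d k / (d k + x2)) : x1 = x2 := by
  rcases lt_trichotomy x1 x2 with h | h | h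
  · exact absurd (sct_notlt hd hsum hN hlam h1 h2 h e1 e2) not_false
  · exact h
  · exact absurd (sct_notlt hd hsum hN hlam h2 h1 h e2 e1) not_false

end sctAux

/-- the SCT is differentiable in `λ` with derivative
`∂_λϑ = 1/(1 − (1/N)∑_k d_k²/(d_k+ϑ)²)`, and `1 ≤ ∂_λϑ ≤ ϑ/λ`. -/
theorem sct_deriv_formula_and_bounds (d : ℕ → ℝ) (hd : ∀ k, 0 ≤ d k) (hsum : Summable d)
    (N : ℕ) (hN : 0 < N) (θ : ℝ → ℝ)
    (hθ : ∀ lam, 0 < lam → 0 < θ lam ∧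
      θ lam = lam + (θ lam / N) * ∑' k, d k / (d k + θ lam)) :
    ∀ lam, 0 < lam →
      HasDerivAt θ (1 / (1 - (1 / N) * ∑' k, (d k) ^ 2 / (d k + θ lam) ^ 2)) lam ∧
      1 ≤ 1 / (1 - (1 / N) * ∑' k, (d k) ^ 2 / (d k + θ lam) ^ 2) ∧
      1 / (1 - (1 / N) * ∑' k, (d k) ^ 2 / (d k + θ lam) ^ 2) ≤ θ lam / lam := by
  intro lam hlam
  obtain ⟨ht0, hteq⟩ := hθ lam hlam
  have hNp : (0:ℝ) < N := Nat.cast_pos.mpr hN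
  set t := θ lam with htdef
  set S := ∑' k, d k / (d k + t) with hSdef
  set T := ∑' k, (d k) ^ 2 / (d k + t) ^ 2 with hTdef
  have hS_lt : S < N := sct_S_lt hd hN hlam ht0 hteq
  have hTS : T ≤ S := Summable.tsum_le_tsum (fun k => sct_b3 hd ht0 le_rfl k)
    (sct_sum2 hd hsum ht0) (sct_sum1 hd hsum ht0)
  have hT0 : 0 ≤ T := tsum_nonneg (fun k => by positivity)
  have hDpos : 0 < 1 - (1 / (N:ℝ)) * T := by
    have h1 : (1/(N:ℝ)) * T < (1/(N:ℝ)) * N :=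
      mul_lt_mul_of_pos_left (lt_of_le_of_lt hTS hS_lt) (one_div_pos.mpr hNp)
    have h2 : (1/(N:ℝ)) * (N:ℝ) = 1 := one_div_mul_cancel hNp.ne'
    linarith
  set g : ℝ → ℝ := fun z => z - (1 / (N:ℝ)) * ∑' k, z * d k / (d k + z) with hgdef
  have hcontθ : ContinuousAt θ lam := by
    have hTN : (∑' k, (d k) ^ 2 / (d k + t) ^ 2) < (N:ℝ) := lt_of_le_of_lt hTS hS_lt
    have hTcont : ContinuousAt (fun x => ∑' k, (d k) ^ 2 / (d k + x) ^ 2) t :=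
      (sct_T_contOn hd hsum (half_pos ht0)).continuousAt (Ioi_mem_nhds (half_lt_self ht0))
    have hnb : (fun x => ∑' k, (d k) ^ 2 / (d k + x) ^ 2) ⁻¹' (Iio (N:ℝ)) ∩ Ioi (t/2) ∈ 𝓝 t :=
      inter_mem (hTcont (Iio_mem_nhds hTN)) (Ioi_mem_nhds (half_lt_self ht0))
    obtain ⟨r, hr0, hball⟩ := Metric.mem_nhds_iff.mp hnb
    rw [Metric.continuousAt_iff]
    intro ε hε
    set e := min (r/2) (ε/2) with hedef
    have he0 : 0 < e := lt_min (by linarith) (by linarith)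
    have her : e < r := lt_of_le_of_lt (min_le_left _ _) (by linarith)
    have hIcc : ∀ y ∈ Icc (t-e) (t+e),
        t/2 < y ∧ (∑' k, (d k) ^ 2 / (d k + y) ^ 2) < (N:ℝ) := by
      intro y hy
      have hyb : y ∈ Metric.ball t r := by
        rw [Metric.mem_ball, Real.dist_eq]
        exact lt_of_le_of_lt (abs_le.mpr ⟨by linarith [hy.1], by linarith [hy.2]⟩) her
      have := hball hyb
      exact ⟨this.2, this.1⟩
    have hmono : StrictMonoOn g (Icc (t-e) (t+e)) := by
      refine strictMonoOn_of_hasDerivWithinAt_pos (convex_Icc _ _)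
        (fun x hx => ((sct_g_deriv hd hsum N
          (lt_trans (half_pos ht0) (hIcc x hx).1)).continuousAt).continuousWithinAt)
        (f' := fun x => 1 - (1 / (N:ℝ)) * ∑' k, (d k) ^ 2 / (d k + x) ^ 2) ?_ ?_
      · rw [interior_Icc]
        intro x hx
        exact (sct_g_deriv hd hsum N
          (lt_trans (half_pos ht0) (hIcc x (Ioo_subset_Icc_self hx)).1)).hasDerivWithinAt
      · rw [interior_Icc]
        intro x hx
        obtain ⟨-, hxT⟩ := hIcc x (Ioo_subset_Icc_self hx)
        have hx0 : 0 ≤ ∑' k, (d k) ^ 2 / (d k + x) ^ 2 := tsum_nonneg (fun k => by positivity)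
        have h1 : (1/(N:ℝ)) * ∑' k, (d k) ^ 2 / (d k + x) ^ 2 < (1/(N:ℝ)) * N :=
          mul_lt_mul_of_pos_left hxT (one_div_pos.mpr hNp)
        have h2 : (1/(N:ℝ)) * (N:ℝ) = 1 := one_div_mul_cancel hNp.ne'
        linarith
    have hcont : ContinuousOn g (Icc (t-e) (t+e)) := fun x hx =>
      ((sct_g_deriv hd hsum N
        (lt_trans (half_pos ht0) (hIcc x hx).1)).continuousAt).continuousWithinAt
    have htmem : t ∈ Icc (t-e) (t+e) := ⟨by linarith, by linarith⟩
    have hgt : g t = lam := by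
      simp only [hgdef]
      rw [sct_key]
      linarith
    have hlow : g (t-e) < lam := by
      rw [← hgt]
      exact hmono ⟨le_rfl, by linarith⟩ htmem (by linarith)
    have hhigh : lam < g (t+e) := by
      rw [← hgt]
      exact hmono htmem ⟨by linarith, le_rfl⟩ (by linarith)
    refine ⟨min (min (lam - g (t-e)) (g (t+e) - lam)) lam,
      lt_min (lt_min (by linarith) (by linarith)) hlam, ?_⟩
    intro x hx
    rw [Real.dist_eq] at hx ⊢
    obtain ⟨hxa, hxb⟩ := abs_lt.mp hx
    have d1 : min (min (lam - g (t-e)) (g (t+e) - lam)) lam ≤ lam - g (t-e) :=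
      le_trans (min_le_left _ _) (min_le_left _ _)
    have d2 : min (min (lam - g (t-e)) (g (t+e) - lam)) lam ≤ g (t+e) - lam :=
      le_trans (min_le_left _ _) (min_le_right _ _)
    have d3 : min (min (lam - g (t-e)) (g (t+e) - lam)) lam ≤ lam := min_le_right _ _
    have hx0 : 0 < x := by linarith
    obtain ⟨c, hc, hgc⟩ := intermediate_value_Icc (by linarith : t-e ≤ t+e) hcont
      (⟨by linarith, by linarith⟩ : x ∈ Icc (g (t-e)) (g (t+e)))
    have hc0 : 0 < c := lt_trans (half_pos ht0) (hIcc c hc).1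
    have hceq : c = x + (c / (N:ℝ)) * ∑' k, d k / (d k + c) := by
      have h := hgc
      simp only [hgdef] at h
      rw [sct_key] at h
      linarith
    have hθx : θ x = c :=
      sct_unique hd hsum hN hx0 (hθ x hx0).1 hc0 (hθ x hx0).2 hceq
    rw [hθx]
    have he2 : e ≤ ε/2 := min_le_right _ _
    rw [abs_lt]
    exact ⟨by linarith [hc.1], by linarith [hc.2]⟩
  have hinv : ∀ᶠ y in 𝓝 lam, g (θ y) = y := by
    filter_upwards [Ioi_mem_nhds hlam] with y hy
    obtain ⟨hy0, hyeq⟩ := hθ y hy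
    simp only [hgdef]
    rw [sct_key]
    linarith
  have hder : HasDerivAt θ (1 - (1 / (N:ℝ)) * T)⁻¹ lam := by
    have hg_at : HasDerivAt g (1 - (1 / (N:ℝ)) * T) (θ lam) := sct_g_deriv hd hsum N ht0
    exact hg_at.of_local_left_inverse hcontθ hDpos.ne' hinv
  refine ⟨by rw [one_div]; exact hder, ?_, ?_⟩
  · rw [le_div_iff₀ hDpos]
    have : 0 ≤ (1/(N:ℝ)) * T := mul_nonneg (by positivity) hT0
    linarith
  · have hu : (t / (N:ℝ)) * T ≤ t - lam := by
      calc (t/(N:ℝ)) * T ≤ (t/(N:ℝ)) * S := mul_le_mul_of_nonneg_left hTS (by positivity)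
        _ = t - lam := by linarith
    have hlam_t : lam / t ≤ 1 - (1 / (N:ℝ)) * T := by
      rw [div_le_iff₀ ht0]
      have hr : (1 - (1/(N:ℝ)) * T) * t = t - (t/(N:ℝ)) * T := by ring
      linarith [hr]
    have h6 : 1 / (1 - (1 / (N:ℝ)) * T) ≤ 1 / (lam / t) :=
      one_div_le_one_div_of_le (div_pos hlam ht0) hlam_t
    rwa [one_div_div] at h6
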